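/- arXiv:2003.00524 — 5 statements merged into one kernel-verified Lean document; each statement's English description precedes it below -/
import Mathlib

section
/- Let \(A_n\) (n ≥ 2) be an n×n upper Hessenberg–Toeplitz matrix with subdiagonal entries \(a_{-1} \neq 0\), and let \(x = (x_{n-1}, x_{n-2}, \ldots, x_0)^\top\) be an eigenvector of \(A_n\) with eigenvalue \(\lambda\). Then for all \(1 \leq i \leq n-1\), \(x_i = (-1/a_{-1})^i d_i(\lambda) x_0\), where \(d_i(\lambda)\) is the characteristic polynomial of the i×i leading Hessenberg–Toeplitz matrix \(A_i\) built from the same sequence. -/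
/-- The n×n upper Hessenberg–Toeplitz matrix with entry (i,j) equal to
`a (j - i)` for `j ≥ i - 1` and 0 otherwise. -/
def htMatrix {R : Type*} [CommRing R] (a : ℤ → R) (n : ℕ) :
    Matrix (Fin n) (Fin n) R :=
  Matrix.of fun i j => if (i : ℤ) ≤ (j : ℤ) + 1 then a ((j : ℤ) - (i : ℤ)) else 0

/-- The characteristic polynomial of `htMatrix a n` evaluated at `lam`. -/
def htCharPolyEval {R : Type*} [CommRing R] (a : ℤ → R) (n : ℕ) (lam : R) : R :=
  (htMatrix a n - lam • (1 : Matrix (Fin n) (Fin n) R)).det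

namespace HT
variable {R : Type*} [CommRing R]

def bent (a : ℤ → R) (lam : R) (p q : ℕ) : R :=
  (if (p : ℤ) ≤ (q : ℤ) + 1 then a ((q : ℤ) - (p : ℤ)) else 0) - (if p = q then lam else 0)

lemma bent_eq_zero (a : ℤ → R) (lam : R) (p q : ℕ) (h : q + 1 < p) : bent a lam p q = 0 := by
  rw [bent, if_neg (by omega), if_neg (by omega), sub_zero]

lemma bent_sub (a : ℤ → R) (lam : R) (p q : ℕ) (h : p = q + 1) : bent a lam p q = a (-1) := by
  subst h
  rw [bent, if_pos (by omega), if_neg (by omega), sub_zero]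
  congr 1
  push_cast
  ring

lemma bent_congr (a : ℤ → R) (lam : R) (p q p' q' : ℕ)
    (h : (q : ℤ) - (p : ℤ) = (q' : ℤ) - (p' : ℤ)) :
    bent a lam p q = bent a lam p' q' := by
  have h1 : ((p : ℤ) ≤ (q : ℤ) + 1) = ((p' : ℤ) ≤ (q' : ℤ) + 1) := by
    simp only [eq_iff_iff]; omega
  have h2 : (p = q) = (p' = q') := by
    simp only [eq_iff_iff]; omega
  rw [bent, bent, h]
  congr 1
  · exact if_congr (by omega) rfl rfl
  · exact if_congr (by omega) rfl rfl

def Bm (a : ℤ → R) (lam : R) (n : ℕ) : Matrix (Fin n) (Fin n) R :=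
  htMatrix a n - lam • (1 : Matrix (Fin n) (Fin n) R)

lemma Bm_apply (a : ℤ → R) (lam : R) (n : ℕ) (p q : Fin n) :
    Bm a lam n p q = bent a lam p q := by
  simp only [Bm, bent, htMatrix, Matrix.sub_apply, Matrix.smul_apply, Matrix.one_apply,
    Matrix.of_apply, smul_eq_mul, Fin.ext_iff]
  congr 1
  split <;> simp

lemma succAbove_val {k : ℕ} (p : Fin (k+1)) (r : Fin k) :
    ((p.succAbove r : Fin (k+1)) : ℕ) = if (r : ℕ) < (p : ℕ) then (r : ℕ) else (r : ℕ) + 1 := by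
  rw [Fin.succAbove]
  split
  · rw [if_pos]; · simp
    · simpa [Fin.lt_def] using (by assumption : r.castSucc < p)
  · rw [if_neg]; · simp
    · simpa [Fin.lt_def, not_lt] using (by assumption : ¬ r.castSucc < p)

lemma minor_det (a : ℤ → R) (lam : R) (k i : ℕ) (hik : i ≤ k) :
    ((Bm a lam (k+1)).submatrix (Fin.succAbove ⟨i, by omega⟩) Fin.castSucc).det
      = (Bm a lam i).det * a (-1) ^ (k - i) := by
  have h : i + (k - i) = k := by omega
  let e : Fin i ⊕ Fin (k - i) ≃ Fin k := finSumFinEquiv.trans (finCongr h)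
  rw [← Matrix.det_submatrix_equiv_self e]
  have heq : (((Bm a lam (k+1)).submatrix (Fin.succAbove ⟨i, by omega⟩) Fin.castSucc).submatrix e e)
      = Matrix.fromBlocks (Bm a lam i)
          (Matrix.of fun (r : Fin i) (c : Fin (k - i)) => bent a lam r (i + c))
          0
          (Matrix.of fun (r c : Fin (k - i)) => bent a lam (i + r + 1) (i + c)) := by
    ext r c
    rcases r with r | r <;> rcases c with c | c <;>
      simp only [Matrix.submatrix_apply, Matrix.fromBlocks_apply₁₁, Matrix.fromBlocks_apply₁₂,
        Matrix.fromBlocks_apply₂₁, Matrix.fromBlocks_apply₂₂, Matrix.of_apply, Matrix.zero_apply,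
        Bm_apply, succAbove_val, Fin.coe_castSucc] <;>
      simp only [e, Equiv.trans_apply, finSumFinEquiv_apply_left, finSumFinEquiv_apply_right,
        finCongr_apply, Fin.coe_cast, Fin.coe_castAdd, Fin.coe_natAdd]
    · rw [if_pos (by omega)]
    · rw [if_pos (by omega)]
    · rw [if_neg (by omega)]
      exact bent_eq_zero _ _ _ _ (by omega)
    · rw [if_neg (by omega)]
  rw [heq, Matrix.det_fromBlocks_zero₂₁]
  congr 1
  rw [Matrix.det_of_upperTriangular]
  · simp only [Matrix.of_apply]
    have hd : ∀ r : Fin (k - i), bent a lam (i + (r:ℕ) + 1) (i + (r:ℕ)) = a (-1) :=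
      fun r => bent_sub _ _ _ _ (by omega)
    simp only [hd, Finset.prod_const, Finset.card_univ, Fintype.card_fin]
  · intro p q hpq
    exact bent_eq_zero _ _ _ _ (by simp only [Fin.lt_def, id] at hpq; omega)

lemma det_succ (a : ℤ → R) (lam : R) (k : ℕ) :
    (Bm a lam (k+1)).det = ∑ m ∈ Finset.range (k+1),
      (-1:R)^(m+k) * bent a lam m k * ((Bm a lam m).det * a (-1)^(k-m)) := by
  rw [Matrix.det_succ_column (Bm a lam (k+1)) (Fin.last k),
    ← Fin.sum_univ_eq_sum_range
      (fun m => (-1:R)^(m+k) * bent a lam m k * ((Bm a lam m).det * a (-1)^(k-m))) (k+1)]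
  refine Finset.sum_congr rfl fun i _ => ?_
  rw [Fin.succAbove_last, Bm_apply, Fin.val_last,
    minor_det a lam k i (by omega)]

end HT

/-- If `x = (x_{n-1}, …, x_0)ᵀ` is an eigenvector of the Hessenberg–Toeplitz
matrix `A_n` (n ≥ 2, subdiagonal `a_{-1} ≠ 0`) with eigenvalue `λ`, then
`x_i = (-1/a_{-1})^i d_i(λ) x_0` for all `1 ≤ i ≤ n-1`, where `d_i` is the
characteristic polynomial of the i×i matrix built from the same sequence. -/
theorem stmt2 {R : Type*} [Field R] (a : ℤ → R) (ha : a (-1) ≠ 0)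
    (n : ℕ) (hn : 2 ≤ n) (lam : R) (x : ℕ → R)
    (hx : (htMatrix a n).mulVec (fun i : Fin n => x (n - 1 - (i : ℕ))) =
      lam • (fun i : Fin n => x (n - 1 - (i : ℕ))))
    (hx0 : (fun i : Fin n => x (n - 1 - (i : ℕ))) ≠ 0) :
    ∀ i : ℕ, 1 ≤ i → i ≤ n - 1 →
      x i = (-1 / a (-1)) ^ i * htCharPolyEval a i lam * x 0 := by
  classical
  set c : R := -1 / a (-1) with hc
  have hca : c * a (-1) = -1 := div_mul_cancel₀ (-1) ha
  have hBv : (HT.Bm a lam n).mulVec (fun j : Fin n => x (n - 1 - (j : ℕ))) = 0 := by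
    rw [HT.Bm, Matrix.sub_mulVec, hx, Matrix.smul_mulVec, Matrix.one_mulVec, sub_self]
  have hrow : ∀ r : Fin n,
      ∑ j : Fin n, HT.bent a lam (r : ℕ) (j : ℕ) * x (n - 1 - (j : ℕ)) = 0 := by
    intro r
    simpa [Matrix.mulVec, dotProduct, HT.Bm_apply] using congrFun hBv r
  suffices H : ∀ k, k ≤ n - 1 → x k = c ^ k * htCharPolyEval a k lam * x 0 by
    intro i _ hi2; exact H i hi2
  intro k
  induction k using Nat.strong_induction_on with
  | _ k IH =>
    intro hk
    match k, hk with
    | 0, _ =>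
      simp [htCharPolyEval, Matrix.det_fin_zero]
    | (k+1), hk =>
      have hkn : k + 2 ≤ n := by omega
      -- the row equation for row n-1-k
      have h0 := hrow ⟨n - 1 - k, by omega⟩
      rw [Fin.sum_univ_eq_sum_range
        (fun j => HT.bent a lam (n - 1 - k) j * x (n - 1 - j)) n] at h0
      have h1 : (∑ j ∈ Finset.range n, HT.bent a lam (n - 1 - k) j * x (n - 1 - j))
          = ∑ m ∈ Finset.range n, HT.bent a lam (n - 1 - k) (n - 1 - m) * x m := by
        rw [← Finset.sum_range_reflect (fun m => HT.bent a lam (n - 1 - k) (n - 1 - m) * x m) n]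
        refine Finset.sum_congr rfl fun j hj => ?_
        have hj' : j < n := Finset.mem_range.mp hj
        have he : n - 1 - (n - 1 - j) = j := by omega
        rw [he]
      rw [h1] at h0
      have h2 : (∑ m ∈ Finset.range n, HT.bent a lam (n - 1 - k) (n - 1 - m) * x m)
          = ∑ m ∈ Finset.range (k+2), HT.bent a lam (n - 1 - k) (n - 1 - m) * x m := by
        refine (Finset.sum_subset (Finset.range_subset_range.mpr (by omega)) fun m hm hm' => ?_).symm
        have h3 : k + 2 ≤ m := by
          by_contra h4
          exact hm' (Finset.mem_range.mpr (by omega))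
        have h5 : m < n := Finset.mem_range.mp hm
        rw [HT.bent_eq_zero a lam (n - 1 - k) (n - 1 - m) (by omega), zero_mul]
      rw [h2, Finset.sum_range_succ,
        HT.bent_sub a lam (n - 1 - k) (n - 1 - (k+1)) (by omega)] at h0
      have h6 : ∀ m ∈ Finset.range (k+1),
          HT.bent a lam (n - 1 - k) (n - 1 - m) * x m = HT.bent a lam m k * x m := by
        intro m hm
        have hm' : m ≤ k := by have := Finset.mem_range.mp hm; omega
        rw [HT.bent_congr a lam (n - 1 - k) (n - 1 - m) m k (by omega)]
      rw [Finset.sum_congr rfl h6] at h0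
      -- substitute induction hypothesis
      have h7 : ∀ m ∈ Finset.range (k+1), x m = c ^ m * htCharPolyEval a m lam * x 0 := by
        intro m hm
        have hm' : m < k + 1 := Finset.mem_range.mp hm
        exact IH m (by omega) (by omega)
      -- key coefficient identity
      have key : ∀ m, m ≤ k →
          a (-1) * c ^ (k+1) * ((-1:R) ^ (m+k) * a (-1) ^ (k-m)) = -(c ^ m) := by
        intro m hm
        have h3 : ((-1:R)) ^ (m+k) = (-1) ^ (k-m) := by
          rw [show m + k = (k - m) + 2*m by omega, pow_add, pow_mul]
          simp
        have h4 : c * -1 * a (-1) = 1 := by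
          rw [mul_comm c (-1:R), mul_assoc, hca]
          norm_num
        calc a (-1) * c ^ (k+1) * ((-1:R) ^ (m+k) * a (-1) ^ (k-m))
            = (a (-1) * c ^ (m+1)) * ((c * -1 * a (-1)) ^ (k-m)) := by
              rw [h3, show k + 1 = (m+1)+(k-m) by omega, pow_add, mul_pow, mul_pow]
              ring
          _ = (c * a (-1)) * c ^ m := by rw [h4, one_pow]; ring
          _ = -(c ^ m) := by rw [hca]; ring
      -- conclude
      have h8 : ∑ m ∈ Finset.range (k+1), HT.bent a lam m k * x m
          = ∑ m ∈ Finset.range (k+1),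
              HT.bent a lam m k * (c ^ m * (HT.Bm a lam m).det * x 0) :=
        Finset.sum_congr rfl fun m hm => by rw [h7 m hm]; rfl
      have h9 : a (-1) * x (k+1)
          = -∑ m ∈ Finset.range (k+1),
              HT.bent a lam m k * (c ^ m * (HT.Bm a lam m).det * x 0) := by
        rw [← h8]; linear_combination h0
      refine mul_left_cancel₀ ha ?_
      have h10 : a (-1) * (c ^ (k+1) * (∑ m ∈ Finset.range (k+1),
            (-1:R)^(m+k) * HT.bent a lam m k * ((HT.Bm a lam m).det * a (-1)^(k-m))) * x 0)
          = ∑ m ∈ Finset.range (k+1), (a (-1) * c ^ (k+1) * ((-1:R)^(m+k) * a (-1)^(k-m)))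
              * (HT.bent a lam m k * ((HT.Bm a lam m).det * x 0)) := by
        simp only [Finset.mul_sum, Finset.sum_mul]
        exact Finset.sum_congr rfl fun m _ => by ring
      have h11 : ∑ m ∈ Finset.range (k+1), (a (-1) * c ^ (k+1) * ((-1:R)^(m+k) * a (-1)^(k-m)))
              * (HT.bent a lam m k * ((HT.Bm a lam m).det * x 0))
          = ∑ m ∈ Finset.range (k+1),
              -(HT.bent a lam m k * (c ^ m * (HT.Bm a lam m).det * x 0)) :=
        Finset.sum_congr rfl fun m hm => by
          rw [key m (by have := Finset.mem_range.mp hm; omega)]; ring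
      rw [show htCharPolyEval a (k+1) lam = (HT.Bm a lam (k+1)).det from rfl, HT.det_succ,
        h9, h10, h11, Finset.sum_neg_distrib]
end

section
/- Define polynomials \(k_r(\lambda)\) by \(k_0(\lambda) = 1\) and the recurrence \(k_r(\lambda) = (\binom{k-2}{k-3} - \lambda) k_{r-1}(\lambda) - \sum_{i=2}^{r} (-1)^i \binom{k+i-3}{k-3} k_{r-i}(\lambda)\), where \(k \geq 3\) is a fixed integer. Then \(k_r(\lambda) = \sum_{\ell=0}^{r} (-1)^\ell \binom{(k-2)(\ell+1)}{r-\ell} \lambda^\ell\). -/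
open Finset

private lemma keylem : ∀ (a m n : ℕ), a ≤ m →
    ∑ i ∈ range (n+1), (-1:ℚ)^i * ((a + i - 1).choose i : ℚ) * (m.choose (n - i) : ℚ)
      = ((m - a).choose n : ℚ) := by
  intro a
  induction a with
  | zero =>
    intro m n _
    rw [Finset.sum_eq_single 0]
    · simp
    · intro i hi hne
      have h : (0 + i - 1).choose i = 0 := Nat.choose_eq_zero_of_lt (by omega)
      rw [h]; simp
    · simp
  | succ a ih =>
    intro m n hm
    have hm' : a ≤ m := by omega
    induction n with
    | zero => simp
    | succ n ihn =>
      have step : ∑ i ∈ range (n+1+1), (-1:ℚ)^i * ((a + 1 + i - 1).choose i : ℚ) * (m.choose (n+1 - i) : ℚ)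
          = (∑ i ∈ range (n+1+1), (-1:ℚ)^i * ((a + i - 1).choose i : ℚ) * (m.choose (n+1 - i) : ℚ))
            - ∑ i ∈ range (n+1), (-1:ℚ)^i * ((a + 1 + i - 1).choose i : ℚ) * (m.choose (n - i) : ℚ) := by
        rw [Finset.sum_range_succ' (fun i => (-1:ℚ)^i * ((a + 1 + i - 1).choose i : ℚ) * (m.choose (n+1 - i) : ℚ)) (n+1),
            Finset.sum_range_succ' (fun i => (-1:ℚ)^i * ((a + i - 1).choose i : ℚ) * (m.choose (n+1 - i) : ℚ)) (n+1)]
        have key : ∀ j ∈ range (n+1),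
            (-1:ℚ)^(j+1) * ((a + 1 + (j+1) - 1).choose (j+1) : ℚ) * (m.choose (n+1 - (j+1)) : ℚ)
            = (-1:ℚ)^(j+1) * ((a + (j+1) - 1).choose (j+1) : ℚ) * (m.choose (n+1 - (j+1)) : ℚ)
              - (-1:ℚ)^j * ((a + 1 + j - 1).choose j : ℚ) * (m.choose (n - j) : ℚ) := by
          intro j hj
          have e1 : a + 1 + (j+1) - 1 = (a + j) + 1 := by omega
          have e2 : a + (j+1) - 1 = a + j := by omega
          have e3 : a + 1 + j - 1 = a + j := by omega
          have e4 : n + 1 - (j+1) = n - j := by omega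
          rw [e1, e2, e3, e4, Nat.choose_succ_succ]
          push_cast
          ring
        rw [Finset.sum_congr rfl key, Finset.sum_sub_distrib]
        simp only [Nat.choose_zero_right, Nat.cast_one]
        ring
      rw [step, ih m (n+1) hm', ihn]
      have e : m - a = (m - (a+1)) + 1 := by omega
      rw [e, Nat.choose_succ_succ]
      push_cast
      ring

private def G (a : ℕ) (lam : ℚ) (s : ℕ) : ℚ :=
  ∑ l ∈ Finset.range (s+1), (-1:ℚ)^l * ((a*(l+1)).choose (s-l) : ℚ) * lam^l

private lemma star (a : ℕ) (ha : 1 ≤ a) (lam : ℚ) (r : ℕ) (hr : 1 ≤ r) :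
    ∑ i ∈ range (r+1), (-1:ℚ)^i * ((a + i - 1).choose i : ℚ) * G a lam (r - i)
      = -lam * G a lam (r-1) := by
  unfold G
  have swap : ∑ i ∈ range (r+1), (-1:ℚ)^i * ((a + i - 1).choose i : ℚ) *
        ∑ l ∈ Finset.range (r - i + 1), (-1:ℚ)^l * ((a*(l+1)).choose (r-i-l) : ℚ) * lam^l
      = ∑ l ∈ range (r+1), ∑ i ∈ range (r - l + 1),
          (-1:ℚ)^i * ((a + i - 1).choose i : ℚ) *
            ((-1:ℚ)^l * ((a*(l+1)).choose (r-i-l) : ℚ) * lam^l) := by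
    simp_rw [Finset.mul_sum]
    refine Finset.sum_comm' ?_
    intro i l
    simp only [mem_range]
    omega
  rw [swap]
  have inner : ∀ l ∈ range (r+1),
      ∑ i ∈ range (r - l + 1), (-1:ℚ)^i * ((a + i - 1).choose i : ℚ) *
          ((-1:ℚ)^l * ((a*(l+1)).choose (r-i-l) : ℚ) * lam^l)
      = (-1:ℚ)^l * ((a*l).choose (r-l) : ℚ) * lam^l := by
    intro l hl
    have hma : a ≤ a * (l+1) := by nlinarith
    have hms : a * (l+1) - a = a * l := by
      have : a * (l+1) = a * l + a := by ring
      omega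
    calc ∑ i ∈ range (r - l + 1), (-1:ℚ)^i * ((a + i - 1).choose i : ℚ) *
          ((-1:ℚ)^l * ((a*(l+1)).choose (r-i-l) : ℚ) * lam^l)
        = ((-1:ℚ)^l * lam^l) * ∑ i ∈ range (r - l + 1),
            (-1:ℚ)^i * ((a + i - 1).choose i : ℚ) * (((a*(l+1))).choose (r-l-i) : ℚ) := by
          rw [Finset.mul_sum]
          refine Finset.sum_congr rfl fun i _ => ?_
          have hsub : r - i - l = r - l - i := by omega
          rw [hsub]; ring
      _ = ((-1:ℚ)^l * lam^l) * (((a*(l+1) - a).choose (r-l)) : ℚ) := by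
          rw [keylem a (a*(l+1)) (r-l) hma]
      _ = (-1:ℚ)^l * ((a*l).choose (r-l) : ℚ) * lam^l := by rw [hms]; ring
  rw [Finset.sum_congr rfl inner]
  rw [Finset.sum_range_succ' (fun l => (-1:ℚ)^l * ((a*l).choose (r-l) : ℚ) * lam^l) r]
  have h0 : (-1:ℚ)^0 * (((a*0).choose (r-0) : ℕ) : ℚ) * lam^0 = 0 := by
    have hz : (a*0).choose (r-0) = 0 := by
      rw [Nat.mul_zero, Nat.sub_zero]
      exact Nat.choose_eq_zero_of_lt (by omega)
    rw [hz]; simp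
  rw [h0, add_zero]
  have hr' : r - 1 + 1 = r := by omega
  rw [← hr', Finset.mul_sum]
  simp only [Nat.add_sub_cancel]
  refine Finset.sum_congr rfl fun j hj => ?_
  have e1 : r - 1 + 1 - (j+1) = r - 1 - j := by omega
  rw [e1]
  ring

private lemma grec (a : ℕ) (ha : 1 ≤ a) (lam : ℚ) (r : ℕ) (hr : 1 ≤ r) :
    G a lam r = ((a:ℚ) - lam) * G a lam (r-1)
      - ∑ i ∈ Finset.Icc 2 r, (-1:ℚ)^i * ((a + i - 1).choose (a-1) : ℚ) * G a lam (r-i) := by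
  have hstar := star a ha lam r hr
  have hset : range (r+1) = insert 0 (insert 1 (Finset.Icc 2 r)) := by
    ext x
    simp only [mem_range, mem_insert, Finset.mem_Icc]
    omega
  rw [hset, Finset.sum_insert (by simp), Finset.sum_insert (by simp)] at hstar
  have h0t : (-1:ℚ)^0 * (((a + 0 - 1).choose 0 : ℕ) : ℚ) * G a lam (r - 0) = G a lam r := by
    simp
  have h1t : (-1:ℚ)^1 * (((a + 1 - 1).choose 1 : ℕ) : ℚ) * G a lam (r - 1)
      = -(a:ℚ) * G a lam (r-1) := by
    have : a + 1 - 1 = a := by omega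
    rw [this, Nat.choose_one_right]
    ring
  rw [h0t, h1t] at hstar
  have hcon : ∑ i ∈ Finset.Icc 2 r, (-1:ℚ)^i * ((a + i - 1).choose (a-1) : ℚ) * G a lam (r-i)
      = ∑ i ∈ Finset.Icc 2 r, (-1:ℚ)^i * ((a + i - 1).choose i : ℚ) * G a lam (r-i) := by
    refine Finset.sum_congr rfl fun i hi => ?_
    have e : a + i - 1 = (a - 1) + i := by omega
    rw [e, Nat.choose_symm_add]
  rw [hcon]
  linarith [hstar]

/-- Let `k ≥ 3` and let `f r = k_r(λ)` satisfy `k_0(λ) = 1` and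
`k_r(λ) = (C(k-2,k-3) - λ) k_{r-1}(λ) - ∑_{i=2}^{r} (-1)^i C(k+i-3,k-3) k_{r-i}(λ)`.
Then `k_r(λ) = ∑_{ℓ=0}^{r} (-1)^ℓ C((k-2)(ℓ+1), r-ℓ) λ^ℓ`. -/
theorem stmt3 (k : ℕ) (hk : 3 ≤ k) (lam : ℚ) (f : ℕ → ℚ) (h0 : f 0 = 1)
    (hrec : ∀ r, 1 ≤ r →
      f r = ((Nat.choose (k - 2) (k - 3) : ℚ) - lam) * f (r - 1) -
        ∑ i ∈ Finset.Icc 2 r,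
          (-1 : ℚ) ^ i * (Nat.choose (k + i - 3) (k - 3) : ℚ) * f (r - i)) :
    ∀ r, f r = ∑ l ∈ Finset.range (r + 1),
      (-1 : ℚ) ^ l * (Nat.choose ((k - 2) * (l + 1)) (r - l) : ℚ) * lam ^ l := by
  intro r
  induction r using Nat.strong_induction_on with
  | _ r IH =>
    match r, IH with
    | 0, _ => simpa using h0
    | (s+1), IH =>
      set r := s + 1 with hrdef
      have hr : 1 ≤ r := Nat.le_add_left 1 s
      have ha : 1 ≤ k - 2 := by omega
      show f r = G (k-2) lam r
      rw [hrec r hr, grec (k-2) ha lam r hr]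
      have hc : (Nat.choose (k - 2) (k - 3) : ℚ) = ((k-2 : ℕ) : ℚ) := by
        have e : k - 2 = (k - 3) + 1 := by omega
        rw [e, Nat.choose_succ_self_right]
      have hf1 : f (r - 1) = G (k-2) lam (r-1) := IH (r-1) (by omega)
      rw [hc, hf1]
      congr 1
      refine Finset.sum_congr rfl fun i hi => ?_
      have hi2 : 2 ≤ i ∧ i ≤ r := by simpa [Finset.mem_Icc] using hi
      have e1 : k + i - 3 = (k - 2) + i - 1 := by omega
      have e2 : k - 3 = (k - 2) - 1 := by omega
      have hfi : f (r - i) = G (k-2) lam (r-i) := IH (r-i) (by omega)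
      rw [e1, e2, hfi]
end

section
/- Define polynomials \(g_n(\lambda)\) by \(g_0(\lambda) = 1\) and the recurrence \(g_n(\lambda) = (2 - \lambda) g_{n-1}(\lambda) + \sum_{i=2}^{n} (-1)^{i+1} 2^{2i-1} g_{n-i}(\lambda)\). Then \(g_n(\lambda) = \sum_{t=0}^{n} \sum_{k=t}^{n} (-1)^k \binom{k}{t} \binom{t+1}{n-k} 2^{2n-t-k} \lambda^t\). -/
/-- Binomial coefficient with integer second argument, zero when negative. -/
def Cz (a : ℕ) (b : ℤ) : ℚ := if 0 ≤ b then (a.choose b.toNat : ℚ) else 0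

lemma Cz_neg (a : ℕ) {b : ℤ} (h : b < 0) : Cz a b = 0 := by
  simp [Cz, not_le.2 h]

lemma Cz_pascal (a : ℕ) (b : ℤ) : Cz (a+1) b = Cz a (b-1) + Cz a b := by
  rcases lt_trichotomy b 0 with h | h | h
  · rw [Cz_neg _ h, Cz_neg _ (by omega), Cz_neg _ h]; ring
  · subst h; simp [Cz]
  · have h1 : (0:ℤ) ≤ b - 1 := by omega
    have h0 : (0:ℤ) ≤ b := by omega
    rw [Cz, Cz, Cz, if_pos h0, if_pos h1, if_pos h0]
    have ht : b.toNat = (b-1).toNat + 1 := by omega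
    rw [ht, Nat.choose_succ_succ]
    push_cast; ring

/-- The coefficient of `λ^t` in `g_n`. -/
def aa (n t : ℕ) : ℚ :=
  ∑ k ∈ Finset.Icc t n,
    (-1 : ℚ) ^ k * (Nat.choose k t : ℚ) * (Nat.choose (t + 1) (n - k) : ℚ) * 2 ^ (2 * n - t - k)

/-- The summand, in integer-exponent form. -/
def ff (n t k : ℕ) : ℚ :=
  (-1 : ℚ) ^ k * (Nat.choose k t : ℚ) * Cz (t + 1) ((n : ℤ) - (k : ℤ)) *
    (2 : ℚ) ^ (2 * (n : ℤ) - (t : ℤ) - (k : ℤ))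

lemma aa_zero {n t : ℕ} (h : n < t) : aa n t = 0 := by
  rw [aa, Finset.Icc_eq_empty (by omega), Finset.sum_empty]

lemma sum_range_aa (n t M : ℕ) (hM : n < M) :
    ∑ k ∈ Finset.range M, ff n t k = aa n t := by
  rw [aa, ← Finset.sum_subset (s₁ := Finset.Icc t n) (s₂ := Finset.range M)
      (fun k hk => by simp only [Finset.mem_Icc, Finset.mem_range] at *; omega)
      (fun k hk hk' => by
        simp only [Finset.mem_Icc, Finset.mem_range, not_and, not_le] at hk hk'
        rcases lt_or_ge k t with h1 | h1
        · simp [ff, Nat.choose_eq_zero_of_lt h1]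
        · have h2 : n < k := hk' h1
          rw [ff, Cz_neg _ (by omega)]; ring)]
  refine Finset.sum_congr rfl (fun k hk => ?_)
  simp only [Finset.mem_Icc] at hk
  rw [ff, Cz, if_pos (by omega)]
  have e1 : ((n : ℤ) - (k : ℤ)).toNat = n - k := by omega
  have e2 : 2 * (n : ℤ) - (t : ℤ) - (k : ℤ) = ((2 * n - t - k : ℕ) : ℤ) := by omega
  rw [e1, e2, zpow_natCast]

/-- Telescoping function for the main coefficient recurrence. -/
def dd (m s k : ℕ) : ℚ :=
  (-1 : ℚ) ^ k * (Nat.choose k (s + 1) : ℚ) * Cz (s + 1 + 1) (((m + 2 : ℕ) : ℤ) - (k : ℤ)) *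
    (2 : ℚ) ^ ((2 * (m : ℤ) - (s : ℤ) - (k : ℤ)) + 3)

lemma dd_zero (m s : ℕ) : dd m s 0 = 0 := by
  simp [dd]

lemma dd_top (m s : ℕ) : dd m s (m + 3) = 0 := by
  rw [dd, Cz_neg _ (by push_cast; omega)]; ring

lemma perk (m s k : ℕ) :
    ff (m+2) (s+1) k + 2 * ff (m+1) (s+1) k + ff (m+1) s k + 4 * ff m s k
      = dd m s k - dd m s (k + 1) := by
  have h2 : (2 : ℚ) ≠ 0 := two_ne_zero
  simp only [ff, dd]
  -- normalize the Cz second arguments at k+1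
  rw [show ((m + 2 : ℕ) : ℤ) - ((k + 1 : ℕ) : ℤ) = ((m + 1 : ℕ) : ℤ) - (k : ℤ) from by
    push_cast; ring]
  -- Pascal steps
  rw [Cz_pascal (s + 1) (((m + 2 : ℕ) : ℤ) - (k : ℤ)),
      Cz_pascal (s + 1) (((m + 1 : ℕ) : ℤ) - (k : ℤ)),
      Nat.choose_succ_succ k s]
  -- normalize remaining Cz arguments
  rw [show ((m + 2 : ℕ) : ℤ) - (k : ℤ) - 1 = ((m + 1 : ℕ) : ℤ) - (k : ℤ) from by push_cast; ring,
      show ((m + 1 : ℕ) : ℤ) - (k : ℤ) - 1 = ((m : ℕ) : ℤ) - (k : ℤ) from by push_cast; ring]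
  -- normalize the exponents
  rw [show 2 * ((m + 2 : ℕ) : ℤ) - ((s + 1 : ℕ) : ℤ) - (k : ℤ)
        = (2 * (m : ℤ) - (s : ℤ) - (k : ℤ)) + 3 from by push_cast; ring,
      show 2 * ((m + 1 : ℕ) : ℤ) - ((s + 1 : ℕ) : ℤ) - (k : ℤ)
        = (2 * (m : ℤ) - (s : ℤ) - (k : ℤ)) + 1 from by push_cast; ring,
      show 2 * ((m + 1 : ℕ) : ℤ) - (s : ℤ) - (k : ℤ)
        = (2 * (m : ℤ) - (s : ℤ) - (k : ℤ)) + 2 from by push_cast; ring,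
      show (2 * (m : ℤ) - (s : ℤ) - ((k + 1 : ℕ) : ℤ)) + 3
        = (2 * (m : ℤ) - (s : ℤ) - (k : ℤ)) + 2 from by push_cast; ring]
  rw [zpow_add₀ h2 _ 3, zpow_add₀ h2 _ 1, zpow_add₀ h2 _ 2]
  push_cast
  ring

lemma key (m s : ℕ) :
    aa (m+2) (s+1) = -2 * aa (m+1) (s+1) - aa (m+1) s - 4 * aa m s := by
  have e1 := sum_range_aa (m+2) (s+1) (m+3) (by omega)
  have e2 := sum_range_aa (m+1) (s+1) (m+3) (by omega)
  have e3 := sum_range_aa (m+1) s (m+3) (by omega)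
  have e4 := sum_range_aa m s (m+3) (by omega)
  have tel : ∑ k ∈ Finset.range (m+3), (dd m s k - dd m s (k+1)) = dd m s 0 - dd m s (m+3) :=
    Finset.sum_range_sub' (dd m s) (m+3)
  have hc : ∑ k ∈ Finset.range (m+3),
      (ff (m+2) (s+1) k + 2 * ff (m+1) (s+1) k + ff (m+1) s k + 4 * ff m s k) = 0 := by
    rw [Finset.sum_congr rfl (fun k _ => perk m s k), tel, dd_zero, dd_top, sub_zero]
  have hd : ∑ k ∈ Finset.range (m+3),
      (ff (m+2) (s+1) k + 2 * ff (m+1) (s+1) k + ff (m+1) s k + 4 * ff m s k)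
      = (∑ k ∈ Finset.range (m+3), ff (m+2) (s+1) k)
        + 2 * (∑ k ∈ Finset.range (m+3), ff (m+1) (s+1) k)
        + (∑ k ∈ Finset.range (m+3), ff (m+1) s k)
        + 4 * (∑ k ∈ Finset.range (m+3), ff m s k) := by
    rw [Finset.sum_add_distrib, Finset.sum_add_distrib, Finset.sum_add_distrib,
        ← Finset.mul_sum, ← Finset.mul_sum]
  rw [hd, e1, e2, e3, e4] at hc
  linarith

/-- Telescoping function for the `t = 0` case. -/
def d0 (m k : ℕ) : ℚ :=
  (-1 : ℚ) ^ k * Cz 1 (((m + 2 : ℕ) : ℤ) - (k : ℤ)) * (2 : ℚ) ^ ((2 * (m : ℤ) - (k : ℤ)) + 4)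

lemma d0_zero (m : ℕ) : d0 m 0 = 0 := by
  rw [d0, Cz, if_pos (by omega)]
  rw [show (((m + 2 : ℕ) : ℤ) - ((0:ℕ) : ℤ)).toNat = m + 2 from by omega]
  simp [Nat.choose_eq_zero_of_lt]

lemma d0_top (m : ℕ) : d0 m (m + 3) = 0 := by
  rw [d0, Cz_neg _ (by push_cast; omega)]; ring

lemma perk0 (m k : ℕ) :
    ff (m+2) 0 k + 2 * ff (m+1) 0 k = d0 m k - d0 m (k + 1) := by
  have h2 : (2 : ℚ) ≠ 0 := two_ne_zero
  simp only [ff, d0, Nat.choose_zero_right, Nat.cast_one, Nat.cast_zero, zero_add]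
  rw [show ((m + 2 : ℕ) : ℤ) - ((k + 1 : ℕ) : ℤ) = ((m + 1 : ℕ) : ℤ) - (k : ℤ) from by
    push_cast; ring]
  rw [show 2 * ((m + 2 : ℕ) : ℤ) - 0 - (k : ℤ)
        = (2 * (m : ℤ) - (k : ℤ)) + 4 from by push_cast; ring,
      show 2 * ((m + 1 : ℕ) : ℤ) - 0 - (k : ℤ)
        = (2 * (m : ℤ) - (k : ℤ)) + 2 from by push_cast; ring,
      show (2 * (m : ℤ) - ((k + 1 : ℕ) : ℤ)) + 4
        = (2 * (m : ℤ) - (k : ℤ)) + 3 from by push_cast; ring]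
  rw [zpow_add₀ h2 _ 4, zpow_add₀ h2 _ 2, zpow_add₀ h2 _ 3]
  push_cast
  ring

lemma key0 (m : ℕ) : aa (m+2) 0 = -2 * aa (m+1) 0 := by
  have e1 := sum_range_aa (m+2) 0 (m+3) (by omega)
  have e2 := sum_range_aa (m+1) 0 (m+3) (by omega)
  have tel : ∑ k ∈ Finset.range (m+3), (d0 m k - d0 m (k+1)) = d0 m 0 - d0 m (m+3) :=
    Finset.sum_range_sub' (d0 m) (m+3)
  have hc : ∑ k ∈ Finset.range (m+3), (ff (m+2) 0 k + 2 * ff (m+1) 0 k) = 0 := by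
    rw [Finset.sum_congr rfl (fun k _ => perk0 m k), tel, d0_zero, d0_top, sub_zero]
  rw [Finset.sum_add_distrib, ← Finset.mul_sum, e1, e2] at hc
  linarith

/-- The claimed closed form. -/
def FF (lam : ℚ) (n : ℕ) : ℚ := ∑ t ∈ Finset.range (n + 1), aa n t * lam ^ t

lemma FF_rec (lam : ℚ) (m : ℕ) :
    FF lam (m + 2) = -(2 + lam) * FF lam (m + 1) - 4 * lam * FF lam m := by
  have h1 : ∑ t ∈ Finset.range (m+3), aa (m+2) t * lam ^ t
      = aa (m+2) 0 + ∑ i ∈ Finset.range (m+2), aa (m+2) (i+1) * lam ^ (i+1) := by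
    rw [Finset.sum_range_succ' (fun t => aa (m+2) t * lam ^ t) (m+2)]
    rw [pow_zero, mul_one]; ring
  have h2 : ∑ t ∈ Finset.range (m+2), aa (m+1) t * lam ^ t
      = aa (m+1) 0 + ∑ i ∈ Finset.range (m+1), aa (m+1) (i+1) * lam ^ (i+1) := by
    rw [Finset.sum_range_succ' (fun t => aa (m+1) t * lam ^ t) (m+1)]
    rw [pow_zero, mul_one]; ring
  have hbig : ∑ i ∈ Finset.range (m+2), aa (m+2) (i+1) * lam ^ (i+1)
      = -2 * (∑ i ∈ Finset.range (m+1), aa (m+1) (i+1) * lam ^ (i+1))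
        - lam * (∑ i ∈ Finset.range (m+2), aa (m+1) i * lam ^ i)
        - 4 * lam * (∑ i ∈ Finset.range (m+1), aa m i * lam ^ i) := by
    have step1 : ∑ i ∈ Finset.range (m+2), aa (m+2) (i+1) * lam ^ (i+1)
        = ∑ i ∈ Finset.range (m+2),
            ((-2) * (aa (m+1) (i+1) * lam ^ (i+1)) - lam * (aa (m+1) i * lam ^ i)
              - 4 * lam * (aa m i * lam ^ i)) :=
      Finset.sum_congr rfl (fun i _ => by rw [key m i]; ring)
    rw [step1, Finset.sum_sub_distrib, Finset.sum_sub_distrib,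
        ← Finset.mul_sum, ← Finset.mul_sum, ← Finset.mul_sum]
    have p1 : ∑ i ∈ Finset.range (m+2), aa (m+1) (i+1) * lam ^ (i+1)
        = ∑ i ∈ Finset.range (m+1), aa (m+1) (i+1) * lam ^ (i+1) := by
      rw [Finset.sum_range_succ, aa_zero (by omega), zero_mul, add_zero]
    have p2 : ∑ i ∈ Finset.range (m+2), aa m i * lam ^ i
        = ∑ i ∈ Finset.range (m+1), aa m i * lam ^ i := by
      rw [Finset.sum_range_succ, aa_zero (by omega), zero_mul, add_zero]
    rw [p1, p2]
  show ∑ t ∈ Finset.range (m+3), aa (m+2) t * lam ^ t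
      = -(2 + lam) * ∑ t ∈ Finset.range (m+2), aa (m+1) t * lam ^ t
        - 4 * lam * ∑ t ∈ Finset.range (m+1), aa m t * lam ^ t
  rw [h1, hbig, h2, key0 m]
  have h3 : ∑ t ∈ Finset.range (m+2), aa (m+1) t * lam ^ t
      = aa (m+1) 0 + ∑ i ∈ Finset.range (m+1), aa (m+1) (i+1) * lam ^ (i+1) := h2
  ring

lemma FF_zero (lam : ℚ) : FF lam 0 = 1 := by
  simp [FF, aa]

lemma FF_one (lam : ℚ) : FF lam 1 = 2 - lam := by
  rw [FF]
  rw [Finset.sum_range_succ, Finset.sum_range_one]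
  have ha0 : aa 1 0 = 2 := by
    rw [aa, show Finset.Icc 0 1 = ({0, 1} : Finset ℕ) from rfl]
    norm_num
  have ha1 : aa 1 1 = -1 := by
    rw [aa, Finset.Icc_self, Finset.sum_singleton]
    norm_num
  rw [ha0, ha1]
  ring

lemma FF_eq (lam : ℚ) (n : ℕ) :
    (∑ t ∈ Finset.range (n + 1), ∑ k ∈ Finset.Icc t n,
      (-1 : ℚ) ^ k * (Nat.choose k t : ℚ) * (Nat.choose (t + 1) (n - k) : ℚ) *
        2 ^ (2 * n - t - k) * lam ^ t) = FF lam n := by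
  refine Finset.sum_congr rfl (fun t _ => ?_)
  rw [aa, Finset.sum_mul]

/-- Let `g n = g_n(λ)` satisfy `g_0(λ) = 1` and
`g_n(λ) = (2 - λ) g_{n-1}(λ) + ∑_{i=2}^{n} (-1)^{i+1} 2^{2i-1} g_{n-i}(λ)`.
Then `g_n(λ) = ∑_{t=0}^{n} ∑_{k=t}^{n} (-1)^k C(k,t) C(t+1,n-k) 2^{2n-t-k} λ^t`. -/
theorem stmt4 (lam : ℚ) (g : ℕ → ℚ) (h0 : g 0 = 1)
    (hrec : ∀ n, 1 ≤ n →
      g n = (2 - lam) * g (n - 1) +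
        ∑ i ∈ Finset.Icc 2 n, (-1 : ℚ) ^ (i + 1) * 2 ^ (2 * i - 1) * g (n - i)) :
    ∀ n, g n = ∑ t ∈ Finset.range (n + 1), ∑ k ∈ Finset.Icc t n,
      (-1 : ℚ) ^ k * (Nat.choose k t : ℚ) * (Nat.choose (t + 1) (n - k) : ℚ) *
        2 ^ (2 * n - t - k) * lam ^ t := by
  have hg1 : g 1 = 2 - lam := by
    have h := hrec 1 (by omega)
    rw [show Finset.Icc 2 1 = (∅ : Finset ℕ) from rfl, Finset.sum_empty] at h
    simpa [h0] using h
  -- the three-term recurrence for g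
  have h3term : ∀ m : ℕ, g (m + 2) = -(2 + lam) * g (m + 1) - 4 * lam * g m := by
    intro m
    have hr2 := hrec (m + 2) (by omega)
    have hr1 := hrec (m + 1) (by omega)
    rw [show m + 2 - 1 = m + 1 from rfl] at hr2
    rw [show m + 1 - 1 = m from rfl] at hr1
    have hS : ∑ i ∈ Finset.Icc 2 (m + 2), (-1 : ℚ) ^ (i + 1) * 2 ^ (2 * i - 1) * g (m + 2 - i)
        = -8 * g m
          - 4 * ∑ i ∈ Finset.Icc 2 (m + 1),
              (-1 : ℚ) ^ (i + 1) * 2 ^ (2 * i - 1) * g (m + 1 - i) := by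
      rw [← Finset.Ico_add_one_right_eq_Icc 2 (m+2), ← Finset.Ico_add_one_right_eq_Icc 2 (m+1),
          Finset.sum_Ico_eq_sum_range, Finset.sum_Ico_eq_sum_range]
      rw [show m + 2 + 1 - 2 = m + 1 from by omega, show m + 1 + 1 - 2 = m from by omega]
      rw [Finset.sum_range_succ' (fun j => (-1 : ℚ) ^ (2 + j + 1) * 2 ^ (2 * (2 + j) - 1)
        * g (m + 2 - (2 + j))) m]
      have hpt : ∀ j ∈ Finset.range m,
          (-1 : ℚ) ^ (2 + (j + 1) + 1) * 2 ^ (2 * (2 + (j + 1)) - 1) * g (m + 2 - (2 + (j + 1)))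
          = -4 * ((-1 : ℚ) ^ (2 + j + 1) * 2 ^ (2 * (2 + j) - 1) * g (m + 1 - (2 + j))) := by
        intro j _
        rw [show m + 2 - (2 + (j + 1)) = m + 1 - (2 + j) from by omega,
            show 2 * (2 + (j + 1)) - 1 = (2 * (2 + j) - 1) + 2 from by omega,
            show 2 + (j + 1) + 1 = (2 + j + 1) + 1 from by omega,
            pow_add, pow_succ]
        ring
      rw [Finset.sum_congr rfl hpt, ← Finset.mul_sum]
      norm_num
      ring
    linear_combination hr2 + hS + 4 * hr1
  -- two-step induction
  have main : ∀ n : ℕ, g n = FF lam n ∧ g (n + 1) = FF lam (n + 1) := by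
    intro n
    induction n with
    | zero => exact ⟨by rw [h0, FF_zero], by rw [hg1, FF_one]⟩
    | succ n ih =>
      refine ⟨ih.2, ?_⟩
      rw [show n + 1 + 1 = n + 2 from rfl, h3term n, ih.1, ih.2]
      exact (FF_rec lam n).symm
  intro n
  rw [(main n).1, ← FF_eq lam n]
end

section
/- Define polynomials \(c_n(\lambda)\) by \(c_0(\lambda) = 1\) and the recurrence \(c_n(\lambda) = (3 - \lambda) c_{n-1}(\lambda) - \sum_{i=2}^{n} (-1)^i (2^{i+1} - 1) c_{n-i}(\lambda)\). Then \(c_n(\lambda) = \sum_{t=0}^{n} \left( \sum_{\ell=0}^{t} \binom{t}{\ell} (-1)^t 2^{t-\ell} 3^{n+2\ell-3t-2} \left[ 2\binom{\ell}{n+2\ell-3t-2} + 9\binom{\ell+1}{n+2\ell-3t} \right] \right) \lambda^t\). -/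
/-- Binomial coefficient with integer arguments, defined to be 0 when the
lower index is negative or exceeds the upper index. -/
def binomZ (a b : ℤ) : ℚ :=
  if 0 ≤ b ∧ b ≤ a then (a.toNat.choose b.toNat : ℚ) else 0

lemma binomZ_neg (a b : ℤ) (h : b < 0) : binomZ a b = 0 := by
  rw [binomZ, if_neg (by omega)]

lemma binomZ_natCast (a b : ℕ) : binomZ (a : ℤ) (b : ℤ) = a.choose b := by
  rw [binomZ]
  split
  · simp
  · next h =>
    have : a < b := by omega
    rw [Nat.choose_eq_zero_of_lt this, Nat.cast_zero]

lemma binomZ_pascal (a : ℕ) (b : ℤ) :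
    binomZ ((a : ℤ) + 1) b = binomZ a b + binomZ a (b - 1) := by
  rcases lt_or_ge b 0 with h | h
  · rw [binomZ_neg _ _ h, binomZ_neg _ _ h, binomZ_neg _ _ (by omega)]; ring
  · obtain ⟨m, rfl⟩ := Int.eq_ofNat_of_zero_le h
    cases m with
    | zero => simp [binomZ]; omega
    | succ k =>
      have e1 : ((a : ℤ) + 1) = ((a + 1 : ℕ) : ℤ) := by push_cast; ring
      have e2 : ((k + 1 : ℕ) : ℤ) - 1 = ((k : ℕ) : ℤ) := by push_cast; ring
      rw [e1, e2, binomZ_natCast, binomZ_natCast, binomZ_natCast,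
        Nat.choose_succ_succ']
      push_cast; ring

def auxH (l : ℕ) (k : ℤ) : ℚ :=
  (3 : ℚ) ^ (k - 2) * (2 * binomZ (l : ℤ) (k - 2) + 9 * binomZ ((l : ℤ) + 1) k)

lemma auxH_key (l : ℕ) (k : ℤ) :
    auxH (l + 1) (k + 2) = auxH l (k + 2) + 3 * auxH l (k + 1) := by
  have h3 : (3 : ℚ) ≠ 0 := by norm_num
  have e0 : k + 2 - 2 = k := by ring
  have e1 : k + 1 - 2 = k - 1 := by ring
  have e2 : ((l + 1 : ℕ) : ℤ) = (l : ℤ) + 1 := by push_cast; ring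
  have e3 : (3 : ℚ) ^ k = 3 * (3 : ℚ) ^ (k - 1) := by
    rw [mul_comm, ← zpow_add_one₀ h3, sub_add_cancel]
  rw [auxH, auxH, auxH, e0, e1, e2]
  rw [show (l : ℤ) + 1 + 1 = ((l + 1 : ℕ) : ℤ) + 1 by push_cast; ring,
    binomZ_pascal (l + 1) (k + 2), binomZ_pascal l k, e2, e3,
    show k + 2 - 1 = k + 1 by ring]
  ring

def auxg (n t : ℕ) : ℚ :=
  ∑ l ∈ Finset.range (t + 1),
    (Nat.choose t l : ℚ) * (-1) ^ t * 2 ^ (t - l) * auxH l ((n : ℤ) + 2 * l - 3 * t)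

def auxF (lam : ℚ) (n : ℕ) : ℚ :=
  ∑ t ∈ Finset.range (n + 1), auxg n t * lam ^ t

lemma auxg_vanish (m s : ℕ) (h : m < s) : auxg m s = 0 := by
  rw [auxg]
  apply Finset.sum_eq_zero
  intro l hl
  rw [Finset.mem_range] at hl
  have hk : (m : ℤ) + 2 * l - 3 * s < 0 := by
    have h1 : (l : ℤ) ≤ (s : ℤ) := by exact_mod_cast Nat.lt_succ_iff.mp hl
    have h2 : (m : ℤ) < s := by exact_mod_cast h
    omega
  rw [auxH, binomZ_neg _ _ (by omega), binomZ_neg _ _ hk]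
  ring

lemma auxg_zero (m : ℕ) (h : 3 ≤ m) : auxg m 0 = 0 := by
  rw [auxg, Finset.sum_range_one, auxH]
  have h2 : (3 : ℤ) ≤ (m : ℤ) := by exact_mod_cast h
  rw [binomZ, if_neg (by push_cast; omega), binomZ, if_neg (by push_cast; omega)]
  ring

lemma pascal_sum (t : ℕ) (a : ℕ → ℚ) :
    ∑ l ∈ Finset.range (t + 2), ((t + 1).choose l : ℚ) * a l
    = ∑ l ∈ Finset.range (t + 2), (t.choose l : ℚ) * a l
      + ∑ l ∈ Finset.range (t + 1), (t.choose l : ℚ) * a (l + 1) := by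
  rw [Finset.sum_range_succ' (fun l => ((t + 1).choose l : ℚ) * a l) (t + 1),
    Finset.sum_range_succ' (fun l => ((t).choose l : ℚ) * a l) (t + 1)]
  simp only [Nat.choose_succ_succ, Nat.choose_zero_right, Nat.cast_add, Nat.cast_one,
    add_mul, Nat.cast_ofNat]
  rw [Finset.sum_add_distrib]
  push_cast
  ring

lemma sum_lin3 (m : ℕ) (coef u v w : ℕ → ℚ) (lam : ℚ) :
    ∑ t ∈ Finset.range m, (-(u t + 3 * v t + 2 * w t)) * (lam * lam ^ t)
    = -lam * ((∑ t ∈ Finset.range m, u t * lam ^ t)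
      + 3 * (∑ t ∈ Finset.range m, v t * lam ^ t)
      + 2 * (∑ t ∈ Finset.range m, w t * lam ^ t)) := by
  induction m with
  | zero => simp
  | succ k ih =>
    rw [Finset.sum_range_succ, Finset.sum_range_succ, Finset.sum_range_succ,
      Finset.sum_range_succ, ih]
    ring

lemma sum_lin3' (m : ℕ) (c p u v w : ℕ → ℚ) :
    (∑ l ∈ Finset.range m, c l * (2 * (p l * w l)))
      + ∑ l ∈ Finset.range m, c l * (p l * (u l + 3 * v l))
    = (∑ l ∈ Finset.range m, c l * (p l * u l))
      + 3 * (∑ l ∈ Finset.range m, c l * (p l * v l))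
      + 2 * (∑ l ∈ Finset.range m, c l * (p l * w l)) := by
  induction m with
  | zero => simp
  | succ k ih =>
    simp only [Finset.sum_range_succ]
    linear_combination ih

lemma auxg_rec (n t : ℕ) :
    auxg (n + 3) (t + 1) = -(auxg (n + 2) t + 3 * auxg (n + 1) t + 2 * auxg n t) := by
  set K : ℤ := (n : ℤ) - 3 * t with hK
  have L1 : auxg (n + 3) (t + 1)
      = (-1 : ℚ) ^ (t + 1) * ∑ l ∈ Finset.range (t + 2),
          ((t + 1).choose l : ℚ) * (2 ^ (t + 1 - l) * auxH l (K + 2 * l)) := by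
    rw [auxg, Finset.mul_sum]
    apply Finset.sum_congr (by norm_num) (fun l _ => ?_)
    rw [show ((n + 3 : ℕ) : ℤ) + 2 * l - 3 * ((t + 1 : ℕ) : ℤ) = K + 2 * l by
      push_cast; ring]
    ring
  have R : ∀ (m : ℕ) (d : ℤ), ((m : ℤ) = K + 3 * t + d) → auxg m t
      = (-1 : ℚ) ^ t * ∑ l ∈ Finset.range (t + 1),
          (t.choose l : ℚ) * (2 ^ (t - l) * auxH l (K + 2 * l + d)) := by
    intro m d hd
    rw [auxg, Finset.mul_sum]
    apply Finset.sum_congr rfl (fun l _ => ?_)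
    rw [show (m : ℤ) + 2 * l - 3 * t = K + 2 * l + d by rw [hd]; ring]
    ring
  have M : ∑ l ∈ Finset.range (t + 2),
        ((t + 1).choose l : ℚ) * (2 ^ (t + 1 - l) * auxH l (K + 2 * l))
      = (∑ l ∈ Finset.range (t + 1), (t.choose l : ℚ) * (2 ^ (t - l) * auxH l (K + 2 * l + 2)))
        + 3 * (∑ l ∈ Finset.range (t + 1), (t.choose l : ℚ) * (2 ^ (t - l) * auxH l (K + 2 * l + 1)))
        + 2 * (∑ l ∈ Finset.range (t + 1), (t.choose l : ℚ) * (2 ^ (t - l) * auxH l (K + 2 * l))) := by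
    rw [pascal_sum t (fun l => 2 ^ (t + 1 - l) * auxH l (K + 2 * l))]
    have e1 : ∑ l ∈ Finset.range (t + 2),
        (t.choose l : ℚ) * (2 ^ (t + 1 - l) * auxH l (K + 2 * l))
        = ∑ l ∈ Finset.range (t + 1),
          (t.choose l : ℚ) * (2 * (2 ^ (t - l) * auxH l (K + 2 * l))) := by
      rw [Finset.sum_range_succ, Nat.choose_succ_self]
      simp only [Nat.cast_zero, zero_mul, add_zero]
      apply Finset.sum_congr rfl (fun l hl => ?_)
      rw [Finset.mem_range] at hl
      rw [show t + 1 - l = (t - l) + 1 by omega, pow_succ]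
      ring
    have e2 : ∑ l ∈ Finset.range (t + 1),
        (t.choose l : ℚ) * (2 ^ (t + 1 - (l + 1)) * auxH (l + 1) (K + 2 * (l + 1 : ℕ)))
        = ∑ l ∈ Finset.range (t + 1),
          (t.choose l : ℚ) * (2 ^ (t - l) * (auxH l (K + 2 * l + 2) + 3 * auxH l (K + 2 * l + 1))) := by
      apply Finset.sum_congr rfl (fun l _ => ?_)
      rw [show K + 2 * ((l + 1 : ℕ) : ℤ) = (K + 2 * l) + 2 by push_cast; ring,
        auxH_key l (K + 2 * l), show t + 1 - (l + 1) = t - l by omega]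
    rw [e1, e2]
    exact sum_lin3' (t + 1) (fun l => (t.choose l : ℚ)) (fun l => (2:ℚ) ^ (t - l))
      (fun l => auxH l (K + 2 * l + 2)) (fun l => auxH l (K + 2 * l + 1))
      (fun l => auxH l (K + 2 * l))
  rw [L1, M, R (n + 2) 2 (by push_cast; ring), R (n + 1) 1 (by push_cast; ring),
    R n 0 (by push_cast; ring)]
  simp only [add_zero]
  ring

lemma auxF_rec (lam : ℚ) (n : ℕ) :
    auxF lam (n + 3) = -lam * (auxF lam (n + 2) + 3 * auxF lam (n + 1) + 2 * auxF lam n) := by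
  have e2 : ∑ t ∈ Finset.range (n + 3), auxg (n + 2) t * lam ^ t = auxF lam (n + 2) := rfl
  have e1 : ∑ t ∈ Finset.range (n + 3), auxg (n + 1) t * lam ^ t = auxF lam (n + 1) := by
    rw [show n + 3 = (n + 2) + 1 from rfl, Finset.sum_range_succ,
      auxg_vanish (n + 1) (n + 2) (by omega), auxF]
    ring
  have e0 : ∑ t ∈ Finset.range (n + 3), auxg n t * lam ^ t = auxF lam n := by
    rw [show n + 3 = (n + 2) + 1 from rfl, Finset.sum_range_succ,
      show n + 2 = (n + 1) + 1 from rfl, Finset.sum_range_succ,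
      auxg_vanish n (n + 2) (by omega), auxg_vanish n (n + 1) (by omega), auxF]
    ring
  have main : auxF lam (n + 3)
      = ∑ t ∈ Finset.range (n + 3),
          (-(auxg (n + 2) t + 3 * auxg (n + 1) t + 2 * auxg n t)) * (lam * lam ^ t) := by
    rw [auxF, show n + 3 + 1 = (n + 3) + 1 from rfl, Finset.sum_range_succ' _ (n + 3),
      auxg_zero (n + 3) (by omega)]
    simp only [zero_mul, add_zero]
    apply Finset.sum_congr rfl (fun t _ => ?_)
    rw [auxg_rec n t, pow_succ]
    ring
  rw [main, sum_lin3 (n + 3) (fun _ => 0) (fun t => auxg (n + 2) t) (fun t => auxg (n + 1) t)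
    (fun t => auxg n t) lam, e2, e1, e0]

lemma auxF_zero (lam : ℚ) : auxF lam 0 = 1 := by
  norm_num [auxF, auxg, auxH, binomZ, Finset.sum_range_succ]

lemma auxF_one (lam : ℚ) : auxF lam 1 = 3 - lam := by
  norm_num [auxF, auxg, auxH, binomZ, Finset.sum_range_succ]
  ring

lemma auxF_two (lam : ℚ) : auxF lam 2 = lam ^ 2 - 6 * lam + 2 := by
  norm_num [auxF, auxg, auxH, binomZ, Finset.sum_range_succ]
  ring

lemma auxF_eq (lam : ℚ) (n : ℕ) :
    auxF lam n = ∑ t ∈ Finset.range (n + 1),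
      (∑ l ∈ Finset.range (t + 1),
        (Nat.choose t l : ℚ) * (-1) ^ t * 2 ^ (t - l) *
          (3 : ℚ) ^ ((n : ℤ) + 2 * l - 3 * t - 2) *
          (2 * binomZ (l : ℤ) ((n : ℤ) + 2 * l - 3 * t - 2) +
            9 * binomZ ((l : ℤ) + 1) ((n : ℤ) + 2 * l - 3 * t))) * lam ^ t := by
  rw [auxF]
  apply Finset.sum_congr rfl (fun t _ => ?_)
  congr 1
  rw [auxg]
  apply Finset.sum_congr rfl (fun l _ => ?_)
  rw [auxH]
  ring


/-- Let `c n = c_n(λ)` satisfy `c_0(λ) = 1` and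
`c_n(λ) = (3 - λ) c_{n-1}(λ) - ∑_{i=2}^{n} (-1)^i (2^{i+1} - 1) c_{n-i}(λ)`.
Then `c_n(λ) = ∑_{t=0}^{n} (∑_{ℓ=0}^{t} C(t,ℓ) (-1)^t 2^{t-ℓ} 3^{n+2ℓ-3t-2}
[2 C(ℓ, n+2ℓ-3t-2) + 9 C(ℓ+1, n+2ℓ-3t)]) λ^t`. -/
theorem stmt5 (lam : ℚ) (c : ℕ → ℚ) (h0 : c 0 = 1)
    (hrec : ∀ n, 1 ≤ n →
      c n = (3 - lam) * c (n - 1) -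
        ∑ i ∈ Finset.Icc 2 n, (-1 : ℚ) ^ i * (2 ^ (i + 1) - 1) * c (n - i)) :
    ∀ n, c n = ∑ t ∈ Finset.range (n + 1),
      (∑ l ∈ Finset.range (t + 1),
        (Nat.choose t l : ℚ) * (-1) ^ t * 2 ^ (t - l) *
          (3 : ℚ) ^ ((n : ℤ) + 2 * l - 3 * t - 2) *
          (2 * binomZ (l : ℤ) ((n : ℤ) + 2 * l - 3 * t - 2) +
            9 * binomZ ((l : ℤ) + 1) ((n : ℤ) + 2 * l - 3 * t))) * lam ^ t := by
  have hc1 : c 1 = 3 - lam := by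
    have h := hrec 1 le_rfl
    rw [show Finset.Icc 2 1 = ∅ from rfl] at h
    simpa [h0] using h
  have hc2 : c 2 = lam ^ 2 - 6 * lam + 2 := by
    have h := hrec 2 (by omega)
    rw [show Finset.Icc 2 2 = {2} from rfl, Finset.sum_singleton] at h
    rw [h, hc1, h0]
    norm_num
    ring
  -- the order-3 linear recurrence
  have hS : ∀ m : ℕ, 1 ≤ m →
      c m = (3 - lam) * c (m - 1) -
        ∑ j ∈ Finset.range (m - 1),
          (-1 : ℚ) ^ (j + 2) * (2 ^ (j + 3) - 1) * c (m - (j + 2)) := by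
    intro m hm
    rw [hrec m hm]
    congr 1
    rw [← Finset.Ico_add_one_right_eq_Icc, Finset.sum_Ico_eq_sum_range,
      show m + 1 - 2 = m - 1 by omega]
    apply Finset.sum_congr rfl (fun j _ => ?_)
    rw [show 2 + j = j + 2 by omega, show j + 2 + 1 = j + 3 by omega]
  have hlin : ∀ n : ℕ, c (n + 3) = -lam * (c (n + 2) + 3 * c (n + 1) + 2 * c n) := by
    intro n
    have h3 := hS (n + 3) (by omega)
    have h2 := hS (n + 2) (by omega)
    have h1 := hS (n + 1) (by omega)
    simp only [Nat.add_sub_cancel, show n + 3 - 1 = n + 2 from rfl,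
      show n + 2 - 1 = n + 1 from rfl, show n + 1 - 1 = n from rfl] at h3 h2 h1
    -- sum identity: S(n+3) + 3 S(n+2) + 2 S(n+1) = 7 c(n+1) + 6 c n
    have hsum :
        (∑ j ∈ Finset.range (n + 2), (-1 : ℚ) ^ (j + 2) * (2 ^ (j + 3) - 1) * c (n + 3 - (j + 2)))
        + 3 * (∑ j ∈ Finset.range (n + 1), (-1 : ℚ) ^ (j + 2) * (2 ^ (j + 3) - 1) * c (n + 2 - (j + 2)))
        + 2 * (∑ j ∈ Finset.range n, (-1 : ℚ) ^ (j + 2) * (2 ^ (j + 3) - 1) * c (n + 1 - (j + 2)))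
        = 7 * c (n + 1) + 6 * c n := by
      have key : ∀ j ∈ Finset.range n,
          ((-1 : ℚ) ^ (j + 1 + 1 + 2) * (2 ^ (j + 1 + 1 + 3) - 1) * c (n + 3 - (j + 1 + 1 + 2)))
          + (3 * ((-1 : ℚ) ^ (j + 1 + 2) * (2 ^ (j + 1 + 3) - 1) * c (n + 2 - (j + 1 + 2)))
          + 2 * ((-1 : ℚ) ^ (j + 2) * (2 ^ (j + 3) - 1) * c (n + 1 - (j + 2)))) = 0 := by
        intro j _
        rw [show n + 3 - (j + 1 + 1 + 2) = n - (j + 1) by omega,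
          show n + 2 - (j + 1 + 2) = n - (j + 1) by omega,
          show n + 1 - (j + 2) = n - (j + 1) by omega]
        norm_num [pow_succ]
        ring
      have hz := Finset.sum_eq_zero key
      rw [Finset.sum_add_distrib, Finset.sum_add_distrib,
        ← Finset.mul_sum _ _ (3 : ℚ), ← Finset.mul_sum _ _ (2 : ℚ)] at hz
      rw [Finset.sum_range_succ' (fun j => (-1 : ℚ) ^ (j + 2) * (2 ^ (j + 3) - 1) * c (n + 3 - (j + 2))) (n + 1),
        Finset.sum_range_succ' (fun j => (-1 : ℚ) ^ (j + 1 + 2) * (2 ^ (j + 1 + 3) - 1) * c (n + 3 - (j + 1 + 2))) n,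
        Finset.sum_range_succ' (fun j => (-1 : ℚ) ^ (j + 2) * (2 ^ (j + 3) - 1) * c (n + 2 - (j + 2))) n]
      norm_num
      rw [show n + 3 - 2 = n + 1 by omega]
      linear_combination hz
    linear_combination h3 + 3 * h2 + 2 * h1 - hsum
  suffices h : ∀ n, c n = auxF lam n ∧ c (n + 1) = auxF lam (n + 1)
      ∧ c (n + 2) = auxF lam (n + 2) by
    intro n
    rw [(h n).1, auxF_eq]
  intro n
  induction n with
  | zero => exact ⟨by rw [h0, auxF_zero], by rw [hc1, auxF_one], by rw [hc2, auxF_two]⟩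
  | succ k ih =>
    refine ⟨ih.2.1, ih.2.2, ?_⟩
    rw [show k + 1 + 2 = k + 3 from rfl, hlin k, auxF_rec, ih.1, ih.2.1, ih.2.2]
end

section
/- Let \(A(t) = \frac{(t-1)^2}{1-2t}\) as a formal power series over \(\mathbb{Q}\). For \(n \geq 1\) and \(1 \leq j \leq n+1\), the coefficient of \(t^{n-j+1}\) in \(\frac{j}{n+1} A(t)^{n+1}\) equals \(\frac{j}{n+1} \sum_{k=\lceil (n+j+1)/2 \rceil}^{n+1} \binom{n+1}{k} \binom{k-j-1}{2k-n-j-1} 2^{2k-n-j-1}\). -/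
/-- `A(t) = (t-1)^2/(1-2t)` as a formal power series over ℚ. -/
noncomputable def Ancp : PowerSeries ℚ :=
  (PowerSeries.X - 1) ^ 2 * (1 - 2 * PowerSeries.X)⁻¹

open PowerSeries Finset

noncomputable def gncp : PowerSeries ℚ := PowerSeries.mk fun n => 2 ^ n

lemma gncp_eq : (1 - 2 * PowerSeries.X : PowerSeries ℚ)⁻¹ = gncp := by
  rw [PowerSeries.inv_eq_iff_mul_eq_one (by simp)]
  have h : gncp * (1 - 2 * PowerSeries.X)
      = gncp - (gncp * PowerSeries.X + gncp * PowerSeries.X) := by ring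
  rw [h]
  ext m
  cases m with
  | zero => simp [gncp]
  | succ t =>
    rw [map_sub, map_add, PowerSeries.coeff_succ_mul_X]
    simp [gncp, pow_succ]
    ring

lemma coeff_gncp_pow (t r : ℕ) :
    PowerSeries.coeff (R := ℚ) r (gncp ^ (t + 1)) = ((r + t).choose t : ℚ) * 2 ^ r := by
  induction t generalizing r with
  | zero => simp [gncp]
  | succ t ih =>
    rw [pow_succ, PowerSeries.coeff_mul,
      Finset.Nat.sum_antidiagonal_eq_sum_range_succ_mk]
    have key : ∀ i ∈ Finset.range (r + 1),
        PowerSeries.coeff (R := ℚ) i (gncp ^ (t+1)) * PowerSeries.coeff (R := ℚ) (r - i) gncp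
          = ((i + t).choose t : ℚ) * 2 ^ r := by
      intro i hi
      rw [Finset.mem_range] at hi
      rw [ih, gncp, PowerSeries.coeff_mk]
      rw [mul_assoc, ← pow_add]
      congr 2
      omega
    rw [Finset.sum_congr rfl key, ← Finset.sum_mul, ← Nat.cast_sum]
    have hs : ∑ i ∈ Finset.range (r + 1), (i + t).choose t = (r + t + 1).choose (t + 1) := by
      rw [← Nat.sum_Icc_choose (r + t) t, ← Finset.Ico_add_one_right_eq_Icc,
        Finset.sum_Ico_eq_sum_range]
      have h1 : r + t + 1 - t = r + 1 := by omega
      rw [h1]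
      apply Finset.sum_congr rfl
      intro i _
      congr 1
      omega
    rw [show r + (t+1) = r + t + 1 from rfl, ← hs]

lemma Ancp_eq : Ancp = 1 + PowerSeries.X ^ 2 * gncp := by
  rw [Ancp, ← gncp_eq]
  have h : ((PowerSeries.X : PowerSeries ℚ) - 1) ^ 2
      = (1 - 2 * PowerSeries.X) + PowerSeries.X ^ 2 := by ring
  rw [h, add_mul, PowerSeries.mul_inv_cancel _ (by simp)]

lemma coeff_Ancp_pow (n m : ℕ) (hm : 1 ≤ m) :
    PowerSeries.coeff (R := ℚ) m (Ancp ^ (n + 1))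
      = ∑ k ∈ Finset.range (n + 2), ((n+1).choose k : ℚ) *
          (if 2 * k ≤ m ∧ 1 ≤ k then ((m - k - 1).choose (k-1) : ℚ) * 2 ^ (m - 2*k) else 0) := by
  rw [Ancp_eq, add_comm, add_pow, map_sum]
  apply Finset.sum_congr rfl
  intro k hk
  rw [Finset.mem_range] at hk
  rw [one_pow, mul_one, mul_pow, ← pow_mul,
    show (((n+1).choose k : ℕ) : ℚ⟦X⟧) = PowerSeries.C (R := ℚ) (((n+1).choose k : ℕ) : ℚ)
      from (map_natCast (PowerSeries.C (R := ℚ)) _).symm,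
    PowerSeries.coeff_mul_C, mul_comm]
  congr 1
  rw [PowerSeries.coeff_X_pow_mul']
  by_cases h2 : 2 * k ≤ m
  · rw [if_pos h2]
    rcases Nat.eq_zero_or_pos k with hk0 | hk1
    · subst hk0
      rw [if_neg (by omega), pow_zero, PowerSeries.coeff_one, if_neg (by omega)]
    · rw [if_pos ⟨h2, hk1⟩]
      obtain ⟨t, rfl⟩ : ∃ t, k = t + 1 := ⟨k - 1, by omega⟩
      rw [coeff_gncp_pow, show m - 2*(t+1) + t = m - (t+1) - 1 from by omega,
        show t + 1 - 1 = t from rfl]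
  · rw [if_neg h2, if_neg (by tauto)]

/-- For `n ≥ 1` and `1 ≤ j ≤ n+1`, the coefficient of `t^{n-j+1}` in
`(j/(n+1)) A(t)^{n+1}` equals
`(j/(n+1)) ∑_{k=⌈(n+j+1)/2⌉}^{n+1} C(n+1,k) C(k-j-1, 2k-n-j-1) 2^{2k-n-j-1}`. -/
theorem stmt11 (n j : ℕ) (hn : 1 ≤ n) (hj1 : 1 ≤ j) (hj2 : j ≤ n + 1) :
    (j : ℚ) / ((n : ℚ) + 1) * PowerSeries.coeff (R := ℚ) (n - j + 1) (Ancp ^ (n + 1))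
      = (j : ℚ) / ((n : ℚ) + 1) *
        ∑ k ∈ Finset.Icc ((n + j + 2) / 2) (n + 1),
          (Nat.choose (n + 1) k : ℚ) *
            binomZ ((k : ℤ) - j - 1) (2 * k - n - j - 1) *
            (2 : ℚ) ^ (2 * (k : ℤ) - n - j - 1) := by
  congr 1
  rcases Nat.lt_or_ge n j with hcase | hcase
  · -- j = n + 1
    have hj : j = n + 1 := by omega
    subst hj
    have hidx : n - (n + 1) + 1 = 1 := by omega
    rw [hidx, coeff_Ancp_pow n 1 le_rfl]
    rw [Finset.sum_eq_zero, Finset.sum_eq_zero]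
    · intro k hk
      rw [Finset.mem_Icc] at hk
      rw [binomZ, if_neg (by push_cast; omega)]
      ring
    · intro k hk
      rw [if_neg (by omega), mul_zero]
  · -- j ≤ n
    set m := n - j + 1 with hmdef
    have hm1 : 1 ≤ m := by omega
    have hmz : (m : ℤ) = (n : ℤ) + 1 - j := by omega
    rw [coeff_Ancp_pow n m hm1]
    have hsub : Finset.Icc ((n + j + 2) / 2) (n + 1) ⊆ Finset.range (n + 2) := by
      intro x hx
      rw [Finset.mem_Icc] at hx
      rw [Finset.mem_range]
      omega
    rw [Finset.sum_subset hsub (by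
      intro x hx hx2
      rw [Finset.mem_range] at hx
      rw [Finset.mem_Icc] at hx2
      rw [binomZ, if_neg (by push_cast; omega)]
      ring)]
    rw [← Finset.sum_range_reflect]
    apply Finset.sum_congr rfl
    intro k hk
    rw [Finset.mem_range] at hk
    rw [show n + 2 - 1 - k = n + 1 - k from rfl]
    have hK : ((n + 1 - k : ℕ) : ℤ) = (n : ℤ) + 1 - k := by omega
    rw [Nat.choose_symm (by omega : k ≤ n + 1)]
    by_cases h : 2 * (n + 1 - k) ≤ m ∧ 1 ≤ n + 1 - k
    · rw [if_pos h]
      rw [binomZ, if_pos (by constructor <;> omega)]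
      have ha : (((k : ℤ) - j - 1).toNat) = m - (n + 1 - k) - 1 := by omega
      have hb : ((2 * (k : ℤ) - n - j - 1).toNat) = m - 2 * (n + 1 - k) := by omega
      rw [ha, hb]
      have hch : (m - (n + 1 - k) - 1).choose (m - 2 * (n + 1 - k))
          = (m - (n + 1 - k) - 1).choose (n + 1 - k - 1) := by
        rw [← Nat.choose_symm (by omega : m - 2 * (n + 1 - k) ≤ m - (n + 1 - k) - 1),
          show m - (n + 1 - k) - 1 - (m - 2 * (n + 1 - k)) = n + 1 - k - 1 from by omega]
      rw [hch]
      have hzp : (2 : ℚ) ^ (2 * (k : ℤ) - n - j - 1)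
          = (2 : ℚ) ^ (m - 2 * (n + 1 - k) : ℕ) := by
        rw [show 2 * (k : ℤ) - n - j - 1 = ((m - 2 * (n + 1 - k) : ℕ) : ℤ) from by omega,
          zpow_natCast]
      rw [hzp]
      ring
    · rw [if_neg h, binomZ, if_neg (by omega)]
      ring
end
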